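/- Multiplicative homological perturbation lemma, derivation part: the perturbed differential d_N' := d_N + p ∘ Σ ∘ x ∘ i is again a graded derivation of degree +1 of the graded algebra N, i.e. d_N'(ab) = d_N'(a)·b + (−1)^{|a|} a·d_N'(b) for all homogeneous a and all b in N. -/

import Mathlib

theorem multiplicative_hpl_derivation
    {R : Type*} [CommRing R] {M N : Type*}
    [Ring M] [Algebra R M] [Ring N] [Algebra R N]
    (𝒜 : ℤ → Submodule R M) (ℬ : ℤ → Submodule R N)
    [GradedAlgebra 𝒜] [GradedAlgebra ℬ]
    (dM : M →ₗ[R] M) (dN : N →ₗ[R] N)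
    (hdM : dM ∘ₗ dM = 0) (hdN : dN ∘ₗ dN = 0)
    (i : N →ₗ[R] M) (p : M →ₗ[R] N) (h : M →ₗ[R] M)
    (hdi : dM ∘ₗ i = i ∘ₗ dN) (hpd : p ∘ₗ dM = dN ∘ₗ p)
    (hpi : p ∘ₗ i = LinearMap.id)
    (hhtp : LinearMap.id - i ∘ₗ p = dM ∘ₗ h + h ∘ₗ dM)
    (hhh : h ∘ₗ h = 0) (hhi : h ∘ₗ i = 0) (hph : p ∘ₗ h = 0)
    (x : M →ₗ[R] M) (hx : (dM + x) ∘ₗ (dM + x) = 0)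
    (K : ℕ) (hK : (x ∘ₗ h) ^ K = 0)
    -- `d_M`, `d_N` and `x` are homogeneous of degree `+1` and graded derivations
    (hdMdeg : ∀ (n : ℤ), ∀ a ∈ 𝒜 n, dM a ∈ 𝒜 (n + 1))
    (hdMder : ∀ (n : ℤ), ∀ a ∈ 𝒜 n, ∀ b : M,
      dM (a * b) = dM a * b + (((-1 : ℤˣ) ^ n : ℤˣ) : ℤ) • (a * dM b))
    (hdNdeg : ∀ (n : ℤ), ∀ a ∈ ℬ n, dN a ∈ ℬ (n + 1))
    (hdNder : ∀ (n : ℤ), ∀ a ∈ ℬ n, ∀ b : N,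
      dN (a * b) = dN a * b + (((-1 : ℤˣ) ^ n : ℤˣ) : ℤ) • (a * dN b))
    (hxdeg : ∀ (n : ℤ), ∀ a ∈ 𝒜 n, x a ∈ 𝒜 (n + 1))
    (hxder : ∀ (n : ℤ), ∀ a ∈ 𝒜 n, ∀ b : M,
      x (a * b) = x a * b + (((-1 : ℤˣ) ^ n : ℤˣ) : ℤ) • (a * x b))
    -- `i` and `p` are degree-0 unital algebra homomorphisms
    (hione : i 1 = 1) (himul : ∀ a b : N, i (a * b) = i a * i b)
    (hideg : ∀ (n : ℤ), ∀ a ∈ ℬ n, i a ∈ 𝒜 n)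
    (hpone : p 1 = 1) (hpmul : ∀ a b : M, p (a * b) = p a * p b)
    (hpdeg : ∀ (n : ℤ), ∀ a ∈ 𝒜 n, p a ∈ ℬ n)
    -- `h` is homogeneous of degree `-1` and an `(i∘p, id)`-derivation
    (hhdeg : ∀ (n : ℤ), ∀ a ∈ 𝒜 n, h a ∈ 𝒜 (n - 1))
    (hhder : ∀ (n : ℤ), ∀ a ∈ 𝒜 n, ∀ b : M,
      h (a * b) = h a * i (p b) + (((-1 : ℤˣ) ^ n : ℤˣ) : ℤ) • (a * h b)) :
    let S : M →ₗ[R] M := ∑ k ∈ Finset.range K, (x ∘ₗ h) ^ k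
    let S' : M →ₗ[R] M := ∑ k ∈ Finset.range (K + 1), (h ∘ₗ x) ^ k
    let i' : N →ₗ[R] M := S' ∘ₗ i
    let p' : M →ₗ[R] N := p ∘ₗ S
    let h' : M →ₗ[R] M := h ∘ₗ S
    let dN' : N →ₗ[R] N := dN + p ∘ₗ S ∘ₗ x ∘ₗ i
    (∀ (n : ℤ), ∀ a ∈ ℬ n, dN' a ∈ ℬ (n + 1)) ∧
    (∀ (n : ℤ), ∀ a ∈ ℬ n, ∀ b : N,
      dN' (a * b) = dN' a * b + (((-1 : ℤˣ) ^ n : ℤˣ) : ℤ) • (a * dN' b)) := by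
  intro S S' i' p' h' dN'
  have php : ∀ z : M, p (h z) = 0 := fun z => by simpa using LinearMap.congr_fun hph z
  have hih : ∀ z : M, h (h z) = 0 := fun z => by simpa using LinearMap.congr_fun hhh z
  have hhiz : ∀ a : N, h (i a) = 0 := fun a => by simpa using LinearMap.congr_fun hhi a
  have hpiz : ∀ a : N, p (i a) = a := fun a => by simpa using LinearMap.congr_fun hpi a
  set T : M →ₗ[R] M := x ∘ₗ h with hT
  have Tapp : ∀ m : M, T m = x (h m) := fun m => rfl
  -- h kills products whose right factor is in the image of h
  have B1 : ∀ z' z'' : M, h (z' * h z'') = 0 := by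
    intro z' z''
    refine DirectSum.Decomposition.inductionOn 𝒜 (motive := fun z' => h (z' * h z'') = 0) ?_ ?_ ?_ z'
    · show h ((0 : M) * h z'') = 0
      rw [zero_mul, map_zero]
    · intro n c
      show h ((c : M) * h z'') = 0
      rw [hhder n c c.2 (h z''), php, hih, map_zero, mul_zero, mul_zero, smul_zero, add_zero]
    · intro m m' hm hm'
      show h ((m + m') * h z'') = 0
      rw [add_mul, map_add, hm, hm', add_zero]
  have Z : ∀ (k : ℕ) (z' z'' : M), p ((T ^ k) (z' * h z'')) = 0 := by
    intro k z' z''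
    cases k with
    | zero => rw [pow_zero, Module.End.one_apply, hpmul, php, mul_zero]
    | succ k =>
      have hz : T (z' * h z'') = 0 := by rw [Tapp, B1, map_zero]
      rw [pow_succ, Module.End.mul_apply, hz, map_zero, map_zero]
  have A : ∀ (k : ℕ) (c z : M), p ((T ^ k) (h c * z)) = 0 := by
    intro k
    induction k with
    | zero => intro c z; rw [pow_zero, Module.End.one_apply, hpmul, php, zero_mul]
    | succ k ih =>
      intro c z
      refine DirectSum.Decomposition.inductionOn 𝒜
        (motive := fun c => p ((T ^ (k + 1)) (h c * z)) = 0) ?_ ?_ ?_ c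
      · show p ((T ^ (k + 1)) (h (0 : M) * z)) = 0
        rw [map_zero, zero_mul, map_zero, map_zero]
      · intro n c
        show p ((T ^ (k + 1)) (h (c : M) * z)) = 0
        have hstep : T ((h (c : M)) * z) = (((-1 : ℤˣ) ^ (n - 1) : ℤˣ) : ℤ) •
            (x (h (c : M)) * h z + (((-1 : ℤˣ) ^ (n - 1) : ℤˣ) : ℤ) • (h (c : M) * x (h z))) := by
          rw [Tapp, hhder (n - 1) (h (c : M)) (hhdeg n c c.2) z, hih, zero_mul, zero_add,
            map_zsmul, hxder (n - 1) (h (c : M)) (hhdeg n c c.2) (h z)]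
        rw [pow_succ]
        simp only [Module.End.mul_apply]
        rw [hstep]
        simp only [map_add, map_zsmul]
        rw [Z k (x (h (c : M))) z, ih (c : M) (x (h z))]
        simp
      · intro m m' hm hm'
        show p ((T ^ (k + 1)) (h (m + m') * z)) = 0
        rw [map_add, add_mul, map_add, map_add, hm, hm', add_zero]
  have L : ∀ (k : ℕ) (a : N) (m : M), p ((T ^ k) (i a * m)) = a * p ((T ^ k) m) := by
    intro k
    induction k with
    | zero => intro a m; rw [pow_zero, Module.End.one_apply, Module.End.one_apply, hpmul, hpiz]
    | succ k ih =>
      intro a m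
      refine DirectSum.Decomposition.inductionOn ℬ
        (motive := fun a => p ((T ^ (k + 1)) (i a * m)) = a * p ((T ^ (k + 1)) m)) ?_ ?_ ?_ a
      · show p ((T ^ (k + 1)) (i (0 : N) * m)) = (0 : N) * p ((T ^ (k + 1)) m)
        rw [map_zero, zero_mul, map_zero, map_zero, zero_mul]
      · intro n a
        show p ((T ^ (k + 1)) (i (a : N) * m)) = (a : N) * p ((T ^ (k + 1)) m)
        have hstep : T (i (a : N) * m) = (((-1 : ℤˣ) ^ n : ℤˣ) : ℤ) •
            (x (i (a : N)) * h m + (((-1 : ℤˣ) ^ n : ℤˣ) : ℤ) • (i (a : N) * x (h m))) := by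
          rw [Tapp, hhder n (i (a : N)) (hideg n a a.2) m, hhiz, zero_mul, zero_add,
            map_zsmul, hxder n (i (a : N)) (hideg n a a.2) (h m)]
        rw [pow_succ]
        simp only [Module.End.mul_apply]
        rw [hstep]
        simp only [map_add, map_zsmul]
        rw [Z k (x (i (a : N))) m, zero_add, smul_smul, ← Units.val_mul,
          Int.units_mul_self, Units.val_one, one_smul]
        exact ih (a : N) (x (h m))
      · intro a a' ha ha'
        show p ((T ^ (k + 1)) (i (a + a') * m)) = (a + a') * p ((T ^ (k + 1)) m)
        rw [map_add, add_mul, map_add, map_add, ha, ha', add_mul]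
  have RL : ∀ (k : ℕ) (w : M) (b : N), p ((T ^ k) (w * i b)) = p ((T ^ k) w) * b := by
    intro k
    induction k with
    | zero => intro w b; rw [pow_zero, Module.End.one_apply, Module.End.one_apply, hpmul, hpiz]
    | succ k ih =>
      intro w b
      refine DirectSum.Decomposition.inductionOn 𝒜
        (motive := fun w => p ((T ^ (k + 1)) (w * i b)) = p ((T ^ (k + 1)) w) * b) ?_ ?_ ?_ w
      · show p ((T ^ (k + 1)) ((0 : M) * i b)) = p ((T ^ (k + 1)) (0 : M)) * b
        simp
      · intro n w
        show p ((T ^ (k + 1)) ((w : M) * i b)) = p ((T ^ (k + 1)) (w : M)) * b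
        have hstep : T ((w : M) * i b) = x (h (w : M)) * i b +
            (((-1 : ℤˣ) ^ (n - 1) : ℤˣ) : ℤ) • (h (w : M) * x (i b)) := by
          rw [Tapp, hhder n (w : M) w.2 (i b), hhiz, mul_zero, smul_zero, add_zero, hpiz,
            hxder (n - 1) (h (w : M)) (hhdeg n w w.2) (i b)]
        rw [pow_succ]
        simp only [Module.End.mul_apply]
        rw [hstep]
        simp only [map_add, map_zsmul]
        rw [A k (w : M) (x (i b)), smul_zero, add_zero]
        exact ih (x (h (w : M))) b
      · intro m m' hm hm'
        show p ((T ^ (k + 1)) ((m + m') * i b)) = p ((T ^ (k + 1)) (m + m')) * b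
        rw [add_mul, map_add, map_add, hm, hm', map_add, map_add, add_mul]
  have Tdeg : ∀ (k : ℕ) (n : ℤ) (m : M), m ∈ 𝒜 n → (T ^ k) m ∈ 𝒜 n := by
    intro k
    induction k with
    | zero => intro n m hm; rw [pow_zero, Module.End.one_apply]; exact hm
    | succ k ih =>
      intro n m hm
      rw [pow_succ, Module.End.mul_apply]
      have h1 : T m ∈ 𝒜 (n - 1 + 1) := hxdeg _ _ (hhdeg n m hm)
      rw [sub_add_cancel] at h1
      exact ih n (T m) h1
  have pS : ∀ m : M, p (S m) = ∑ k ∈ Finset.range K, p ((T ^ k) m) := by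
    intro m
    show p ((∑ k ∈ Finset.range K, (x ∘ₗ h) ^ k) m) = _
    rw [← hT, LinearMap.sum_apply, map_sum]
  have e0 : ∀ c : N, dN' c = dN c + p (S (x (i c))) := fun c => rfl
  constructor
  · intro n a ha
    show dN a + p (S (x (i a))) ∈ ℬ (n + 1)
    refine Submodule.add_mem _ (hdNdeg n a ha) ?_
    rw [pS]
    refine Submodule.sum_mem _ ?_
    intro k _
    exact hpdeg _ _ (Tdeg k (n + 1) _ (hxdeg n _ (hideg n a ha)))
  · intro n a ha b
    simp only [e0]
    have e1 : p (S (x (i (a * b)))) = p (S (x (i a))) * b +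
        (((-1 : ℤˣ) ^ n : ℤˣ) : ℤ) • (a * p (S (x (i b)))) := by
      rw [himul, hxder n (i a) (hideg n a ha) (i b), map_add, map_zsmul, map_add, map_zsmul]
      simp only [pS]
      congr 1
      · rw [Finset.sum_mul]
        exact Finset.sum_congr rfl fun k _ => RL k (x (i a)) b
      · rw [Finset.mul_sum]
        congr 1
        exact Finset.sum_congr rfl fun k _ => L k a (x (i b))
    rw [hdNder n a ha b, e1, add_mul, mul_add, smul_add]
    abel
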